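/- Let p_X be a pmf on a finite set X and μ_X a nonnegative function on X with μ_X(i) ≥ p_X(i) for all i. Then for any pmf (type) q_X on X realizable as the empirical type of a sequence of length n, the probability under the iid p_X measure that an n-length sequence has empirical type q_X is at most 2^{-n D(q_X || μ_X)}, where D(q_X || μ_X) := Σ_i q_X(i) log₂(q_X(i)/μ_X(i)). -/
import Mathlib


open scoped Classical

lemma rpow_two_sum {ι : Type*} (s : Finset ι) (f : ι → ℝ) :
    (2 : ℝ) ^ (∑ i ∈ s, f i) = ∏ i ∈ s, (2 : ℝ) ^ f i := by
  induction s using Finset.cons_induction with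
  | empty => simp
  | cons a s ha ih =>
    rw [Finset.sum_cons, Finset.prod_cons, Real.rpow_add (by norm_num), ih]

/-- if the measure `μX` dominates the pmf `pX` pointwise, then the iid `pX`
probability that a length-`n` sequence has empirical type `qX` is at most
`2^{-n D(qX ‖ μX)}` where `D(qX ‖ μX) = Σ_i qX(i) log₂(qX(i)/μX(i))`. -/
theorem type_class_prob_le_of_dominating
    {X : Type} [Fintype X] [DecidableEq X] [Nonempty X]
    (pX μX qX : X → ℝ) (n : ℕ) (hn : 0 < n)
    (hp0 : ∀ i, 0 ≤ pX i) (hp1 : ∑ i, pX i = 1)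
    (hμ0 : ∀ i, 0 ≤ μX i) (hdom : ∀ i, pX i ≤ μX i)
    (hq0 : ∀ i, 0 ≤ qX i) (hq1 : ∑ i, qX i = 1)
    (hqμ : ∀ i, 0 < qX i → 0 < μX i)
    (hrealizable : ∃ x : Fin n → X,
      ∀ i, ((Finset.univ.filter (fun t => x t = i)).card : ℝ) = n * qX i) :
    ∑ x : Fin n → X,
        (if ∀ i, ((Finset.univ.filter (fun t => x t = i)).card : ℝ) = n * qX i
          then ∏ t, pX (x t) else 0)
      ≤ 2 ^ (-(n : ℝ) * ∑ i, qX i * Real.logb 2 (qX i / μX i)) := by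
  set D := ∑ i, qX i * Real.logb 2 (qX i / μX i) with hDdef
  -- fiberwise product formula
  have hfib : ∀ (x : Fin n → X) (f : X → ℝ),
      (∏ t, f (x t)) = ∏ i, f i ^ (Finset.univ.filter (fun t => x t = i)).card := by
    intro x f
    rw [← Finset.prod_fiberwise_of_maps_to' (g := x) (fun t _ => Finset.mem_univ (x t)) f]
    exact Finset.prod_congr rfl fun i _ => Finset.prod_const (f i)
  -- key per-sequence bound
  have key : ∀ x : Fin n → X,
      (∀ i, ((Finset.univ.filter (fun t => x t = i)).card : ℝ) = n * qX i) →
      (∏ t, pX (x t)) ≤ (∏ t, qX (x t)) * 2 ^ (-(n : ℝ) * D) := by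
    intro x hx
    have h1 : (∏ t, pX (x t)) ≤ ∏ t, μX (x t) :=
      Finset.prod_le_prod (fun t _ => hp0 (x t)) (fun t _ => hdom (x t))
    refine h1.trans_eq ?_
    rw [hfib x μX, hfib x qX]
    have hexp : -(n : ℝ) * D = ∑ i, (-(n : ℝ) * (qX i * Real.logb 2 (qX i / μX i))) := by
      rw [hDdef, Finset.mul_sum]
    rw [hexp, rpow_two_sum, ← Finset.prod_mul_distrib]
    refine Finset.prod_congr rfl fun i _ => ?_
    set c := (Finset.univ.filter (fun t => x t = i)).card with hc
    by_cases hqi : qX i = 0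
    · have hc0 : c = 0 := by
        have := hx i
        rw [hqi, mul_zero] at this
        exact_mod_cast this
      simp [hc0, hqi]
    · have hq : 0 < qX i := lt_of_le_of_ne (hq0 i) (Ne.symm hqi)
      have hμ : 0 < μX i := hqμ i hq
      have he : -(n : ℝ) * (qX i * Real.logb 2 (qX i / μX i))
          = Real.logb 2 (μX i / qX i) * (c : ℝ) := by
        rw [hx i, Real.logb_div hμ.ne' hq.ne', Real.logb_div hq.ne' hμ.ne']
        ring
      rw [he, Real.rpow_mul (by norm_num : (0:ℝ) ≤ 2),
        Real.rpow_logb (by norm_num) (by norm_num) (div_pos hμ hq),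
        Real.rpow_natCast, ← mul_pow]
      congr 1
      field_simp
  -- sum over the type class
  have hsum : ∑ x : Fin n → X,
        (if ∀ i, ((Finset.univ.filter (fun t => x t = i)).card : ℝ) = n * qX i
          then ∏ t, pX (x t) else 0)
      ≤ ∑ x : Fin n → X, (∏ t, qX (x t)) * 2 ^ (-(n : ℝ) * D) := by
    refine Finset.sum_le_sum fun x _ => ?_
    split_ifs with hx
    · exact key x hx
    · exact mul_nonneg (Finset.prod_nonneg fun t _ => hq0 (x t)) (Real.rpow_nonneg (by norm_num) _)
  refine hsum.trans ?_
  rw [← Finset.sum_mul]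
  have hq2 : (∑ x : Fin n → X, ∏ t, qX (x t)) = 1 := by
    rw [← Fintype.prod_sum (κ := fun _ : Fin n => X) (fun _ j => qX j)]
    simp [hq1]
  rw [hq2, one_mul]
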